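/- If the {r,s}-leaper graph on the (r+s)×(2s) board is connected, then so is the leaper graph on any m×n board with m ≥ r+s and n ≥ 2s. -/

import Mathlib

/-- The `{r,s}`-leaper graph on an `m × n` board: vertices are the cells
`(x,y)` with `0 ≤ x < m`, `0 ≤ y < n`, and two cells are adjacent when
their absolute coordinate differences are `{r, s}`. -/
def leaperGraph (r s m n : ℕ) : SimpleGraph (Fin m × Fin n) :=
  SimpleGraph.fromRel fun p q =>
    (Nat.dist p.1.val q.1.val = r ∧ Nat.dist p.2.val q.2.val = s) ∨
    (Nat.dist p.1.val q.1.val = s ∧ Nat.dist p.2.val q.2.val = r)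



lemma leaperGraph_adj {r s m n : ℕ} {p q : Fin m × Fin n} :
    (leaperGraph r s m n).Adj p q ↔ p ≠ q ∧
      ((Nat.dist p.1.val q.1.val = r ∧ Nat.dist p.2.val q.2.val = s) ∨
       (Nat.dist p.1.val q.1.val = s ∧ Nat.dist p.2.val q.2.val = r)) := by
  simp only [leaperGraph, SimpleGraph.fromRel_adj, Nat.dist_comm p.1.val,
    Nat.dist_comm p.2.val]
  tauto

def leaperSwap (r s m n : ℕ) : leaperGraph r s m n ≃g leaperGraph r s n m where
  toEquiv := Equiv.prodComm _ _
  map_rel_iff' := by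
    intro p q
    simp only [leaperGraph, SimpleGraph.fromRel_adj, Equiv.prodComm_apply, Prod.fst_swap,
      Prod.snd_swap, ne_eq, Prod.swap_injective.eq_iff]
    tauto

lemma leaper_extend (r s a b m n : ℕ) (ha : 1 ≤ a) (hb : 1 ≤ b)
    (hab : (a = r ∧ b = s) ∨ (a = s ∧ b = r))
    (hm : a ≤ m) (hn : 2 * b ≤ n)
    (h : (leaperGraph r s m n).Connected) :
    (leaperGraph r s (m + 1) n).Connected := by
  have hn0 : 0 < n := by omega
  let f : Fin m × Fin n → Fin (m + 1) × Fin n := fun p => (p.1.castSucc, p.2)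
  have hfadj : ∀ p q, (leaperGraph r s m n).Adj p q →
      (leaperGraph r s (m + 1) n).Adj (f p) (f q) := by
    intro p q hpq
    rw [leaperGraph_adj] at hpq ⊢
    refine ⟨?_, by simpa [f] using hpq.2⟩
    intro he
    apply hpq.1
    have h1 : p.1 = q.1 := by
      have := congrArg (fun z => z.1.val) he
      exact Fin.ext (by simpa [f] using this)
    have h2 : p.2 = q.2 := congrArg (fun z => z.2) he
    exact Prod.ext h1 h2
  let F : leaperGraph r s m n →g leaperGraph r s (m + 1) n := ⟨f, fun {p q} => hfadj p q⟩
  have key : ∀ w : Fin (m + 1) × Fin n, ∃ p, (leaperGraph r s (m + 1) n).Reachable w (f p) := by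
    intro ⟨x, y⟩
    by_cases hx : x.val < m
    · refine ⟨(⟨x.val, hx⟩, y), ?_⟩
      have : f (⟨x.val, hx⟩, y) = (x, y) := Prod.ext (Fin.ext rfl) rfl
      rw [this]
    · have hxm : x.val = m := by omega
      refine ⟨(⟨m - a, by omega⟩, if _ : b ≤ y.val then ⟨y.val - b, by omega⟩ else ⟨y.val + b, by omega⟩), ?_⟩
      apply SimpleGraph.Adj.reachable
      rw [leaperGraph_adj]
      constructor
      · intro he
        have := congrArg (fun z => z.1.val) he
        simp [f, hxm] at this
        omega
      · split <;> simp only [f, Fin.coe_castSucc, hxm, Nat.dist] <;> rcases hab with ⟨rfl, rfl⟩ | ⟨rfl, rfl⟩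
        · left; omega
        · right; omega
        · left; omega
        · right; omega
  rw [SimpleGraph.connected_iff]
  refine ⟨?_, ⟨(0, ⟨0, hn0⟩)⟩⟩
  intro u v
  obtain ⟨p, hp⟩ := key u
  obtain ⟨q, hq⟩ := key v
  exact hp.trans ((((h.preconnected p q).map F)).trans hq.symm)

/-- If the `{r,s}`-leaper graph on the `(r+s) × 2s` board is connected, then
so is the leaper graph on any `m × n` board with `m ≥ r+s` and `n ≥ 2s`. -/
theorem leaperGraph_connected_mono
    (r s : ℕ) (hr : 1 ≤ r) (hrs : r ≤ s)
    (h : (leaperGraph r s (r + s) (2 * s)).Connected) :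
    ∀ m n : ℕ, r + s ≤ m → 2 * s ≤ n → (leaperGraph r s m n).Connected := by
  intro m n hm hn
  obtain ⟨k, rfl⟩ := Nat.exists_eq_add_of_le hm
  obtain ⟨l, rfl⟩ := Nat.exists_eq_add_of_le hn
  have h1 : ∀ k, (leaperGraph r s (r + s + k) (2 * s)).Connected := by
    intro k
    induction k with
    | zero => exact h
    | succ k ih =>
        exact leaper_extend r s r s (r + s + k) (2 * s) hr (le_trans hr hrs) (Or.inl ⟨rfl, rfl⟩)
          (by omega) le_rfl ih
  have h2 : ∀ l, (leaperGraph r s (2 * s + l) (r + s + k)).Connected := by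
    intro l
    induction l with
    | zero => exact (leaperSwap r s _ _).connected_iff.mp (h1 k)
    | succ l ih =>
        exact leaper_extend r s s r (2 * s + l) (r + s + k) (le_trans hr hrs) hr (Or.inr ⟨rfl, rfl⟩)
          (by omega) (by omega) ih
  exact (leaperSwap r s _ _).connected_iff.mp (h2 l)
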